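/- arXiv:2107.04380 — 3 statements merged into one kernel-verified Lean document; each statement's English description precedes it below -/
import Mathlib

section
/- Let C ⊆ ℝ be a finite nonempty codebook and w ∈ ℝⁿ. Define q* ∈ Cⁿ by q*_i = an element of C closest to w_i, and let s* ∈ ℝⁿ be obtained by keeping the κ largest-magnitude entries of w − q* and zeroing the rest. Then (q*, s*) minimizes Σ_i (w_i − (q_i + s_i))² over all q ∈ Cⁿ and s ∈ ℝⁿ with ‖s‖₀ ≤ κ. -/
/-- Number of nonzero entries of a vector (the ℓ₀ "norm"). -/
noncomputable def norm0 {n : ℕ} (s : Fin n → ℝ) : ℕ :=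
  (Finset.univ.filter (fun i => s i ≠ 0)).card

/-- Theorem 1 (exactly solvable C step for fixed-codebook quantization + sparse
corrections): taking `qstar i` a closest codebook element to `w i`, and `sstar`
keeping the κ largest-magnitude residuals `w i - qstar i` (on an index set `N`)
and zeroing the rest, gives an optimal solution of
`min Σ (w i - (q i + s i))²` over `q ∈ Cⁿ`, `‖s‖₀ ≤ κ`. -/
theorem stmt_0 {n : ℕ} (C : Finset ℝ) (hC : C.Nonempty) (w : Fin n → ℝ) (κ : ℕ)
    (qstar : Fin n → ℝ)
    (hq_mem : ∀ i, qstar i ∈ C)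
    (hq_closest : ∀ i, ∀ c ∈ C, |w i - qstar i| ≤ |w i - c|)
    (N : Finset (Fin n)) (hN : N.card = κ)
    (hN_largest : ∀ i ∈ N, ∀ j ∉ N, |w j - qstar j| ≤ |w i - qstar i|)
    (sstar : Fin n → ℝ)
    (hsstar : ∀ i, sstar i = if i ∈ N then w i - qstar i else 0) :
    norm0 sstar ≤ κ ∧
    ∀ q s : Fin n → ℝ, (∀ i, q i ∈ C) → norm0 s ≤ κ →
      ∑ i, (w i - (qstar i + sstar i))^2 ≤ ∑ i, (w i - (q i + s i))^2 := by
  set r : Fin n → ℝ := fun i => w i - qstar i with hr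
  constructor
  · rw [← hN]
    apply Finset.card_le_card
    intro i hi
    simp only [Finset.mem_filter] at hi
    by_contra h
    exact hi.2 (by rw [hsstar i, if_neg h])
  · intro q s hq hs
    set S : Finset (Fin n) := Finset.univ.filter (fun i => s i ≠ 0) with hS
    have hScard : S.card ≤ κ := hs
    -- LHS equals sum of r² over complement of N
    have hLHS : ∑ i, (w i - (qstar i + sstar i))^2 = ∑ i ∈ Finset.univ \ N, r i ^ 2 := by
      rw [← Finset.sum_filter_add_sum_filter_not Finset.univ (· ∈ N)]
      have h1 : ∑ i ∈ Finset.univ.filter (· ∈ N), (w i - (qstar i + sstar i))^2 = 0 := by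
        apply Finset.sum_eq_zero
        intro i hi
        simp only [Finset.mem_filter] at hi
        rw [hsstar i, if_pos hi.2]; ring
      rw [h1, zero_add]
      rw [show Finset.univ \ N = Finset.univ.filter (¬ · ∈ N) by
        ext x; simp [Finset.mem_sdiff]]
      apply Finset.sum_congr rfl
      intro i hi
      simp only [Finset.mem_filter] at hi
      rw [hsstar i, if_neg hi.2, hr]; ring
    -- RHS ≥ sum of r² over complement of S
    have hRHS : ∑ i ∈ Finset.univ \ S, r i ^ 2 ≤ ∑ i, (w i - (q i + s i))^2 := by
      have step1 : ∑ i ∈ Finset.univ \ S, r i ^ 2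
          ≤ ∑ i ∈ Finset.univ \ S, (w i - (q i + s i))^2 := by
        apply Finset.sum_le_sum
        intro i hi
        have hs0 : s i = 0 := by
          simp only [hS, Finset.mem_sdiff, Finset.mem_filter, Finset.mem_univ,
            true_and, not_not] at hi
          exact hi
        rw [hs0, add_zero, ← sq_abs (r i), ← sq_abs (w i - q i)]
        exact pow_le_pow_left₀ (abs_nonneg _) (hq_closest i (q i) (hq i)) 2
      refine step1.trans ?_
      apply Finset.sum_le_sum_of_subset_of_nonneg Finset.sdiff_subset
      intro i _ _
      positivity
    rw [hLHS]
    refine le_trans ?_ hRHS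
    -- key combinatorial inequality: ∑_{univ\N} r² ≤ ∑_{univ\S} r²
    have hsplit1 : Finset.univ \ N = (Finset.univ \ (N ∪ S)) ∪ (S \ N) := by
      ext x; simp [Finset.mem_sdiff, Finset.mem_union]; tauto
    have hsplit2 : Finset.univ \ S = (Finset.univ \ (N ∪ S)) ∪ (N \ S) := by
      ext x; simp [Finset.mem_sdiff, Finset.mem_union]; tauto
    have hd1 : Disjoint (Finset.univ \ (N ∪ S)) (S \ N) := by
      rw [Finset.disjoint_left]
      intro a ha hb
      simp only [Finset.mem_sdiff, Finset.mem_union] at ha hb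
      exact ha.2 (Or.inr hb.1)
    have hd2 : Disjoint (Finset.univ \ (N ∪ S)) (N \ S) := by
      rw [Finset.disjoint_left]
      intro a ha hb
      simp only [Finset.mem_sdiff, Finset.mem_union] at ha hb
      exact ha.2 (Or.inl hb.1)
    rw [hsplit1, hsplit2, Finset.sum_union hd1, Finset.sum_union hd2]
    apply add_le_add_right
    -- ∑_{S\N} r² ≤ ∑_{N\S} r²
    have hcard : (S \ N).card ≤ (N \ S).card := by
      have h1 : (S \ N).card + (S ∩ N).card = S.card := Finset.card_sdiff_add_card_inter S N
      have h2 : (N \ S).card + (N ∩ S).card = N.card := Finset.card_sdiff_add_card_inter N S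
      have h3 : S ∩ N = N ∩ S := Finset.inter_comm S N
      rw [h3] at h1
      omega
    by_cases hSN : (S \ N).Nonempty
    · have hNS : (N \ S).Nonempty :=
        Finset.card_pos.mp (lt_of_lt_of_le (Finset.card_pos.mpr hSN) hcard)
      obtain ⟨j, hj, hjmin⟩ := Finset.exists_min_image (N \ S) (fun j => r j ^ 2) hNS
      simp only [Finset.mem_sdiff] at hj
      calc ∑ i ∈ S \ N, r i ^ 2 ≤ ∑ _i ∈ S \ N, r j ^ 2 := by
            apply Finset.sum_le_sum
            intro i hi
            simp only [Finset.mem_sdiff] at hi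
            rw [← sq_abs (r i), ← sq_abs (r j)]
            exact pow_le_pow_left₀ (abs_nonneg _) (hN_largest j hj.1 i hi.2) 2
        _ = ((S \ N).card : ℝ) * r j ^ 2 := by rw [Finset.sum_const, nsmul_eq_mul]
        _ ≤ ((N \ S).card : ℝ) * r j ^ 2 := by
            apply mul_le_mul_of_nonneg_right _ (sq_nonneg _)
            exact_mod_cast hcard
        _ ≤ ∑ i ∈ N \ S, r i ^ 2 := by
            rw [← nsmul_eq_mul]
            exact Finset.card_nsmul_le_sum _ _ _ (fun i hi => hjmin i hi)
    · rw [Finset.not_nonempty_iff_eq_empty] at hSN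
      rw [hSN, Finset.sum_empty]
      exact Finset.sum_nonneg (fun i _ => sq_nonneg _)
end

section
/- Let f(q, s) = Σ_{i=1}^n (w_i − q_i − s_i)² for q ∈ Cⁿ (C ⊆ ℝ finite nonempty) and s ∈ ℝⁿ with ‖s‖₀ ≤ κ. Then the minimum value of f equals the sum of the n − κ smallest values among dist(w_i, C)², i = 1,…,n. -/
/-- The optimal objective value of the quantization-plus-sparse-corrections
compression step equals the sum of the `n - κ` smallest values among
`dist(w i, C)²` (here `N` is a set of indices of κ largest distances). -/
theorem stmt_9 {n : ℕ} (C : Finset ℝ) (hC : C.Nonempty) (w : Fin n → ℝ)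
    (κ : ℕ) (hκ : κ ≤ n) (N : Finset (Fin n)) (hN : N.card = κ)
    (hN_largest : ∀ i ∈ N, ∀ j ∉ N,
      C.inf' hC (fun c => |w j - c|) ≤ C.inf' hC (fun c => |w i - c|)) :
    IsLeast {v : ℝ | ∃ q s : Fin n → ℝ, (∀ i, q i ∈ C) ∧ norm0 s ≤ κ ∧
        v = ∑ i, (w i - q i - s i)^2}
      (∑ i ∈ Finset.univ \ N, (C.inf' hC (fun c => |w i - c|))^2) := by
  set d : Fin n → ℝ := fun i => C.inf' hC (fun c => |w i - c|) with hd
  have hd0 : ∀ i, 0 ≤ d i := fun i => Finset.le_inf' hC _ (fun c _ => abs_nonneg _)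
  have key : ∀ S : Finset (Fin n), S.card ≤ κ →
      ∑ i ∈ Finset.univ \ N, (d i)^2 ≤ ∑ i ∈ Finset.univ \ S, (d i)^2 := by
    intro S hS
    have h1 : Finset.univ \ N = (Finset.univ \ (N ∪ S)) ∪ (S \ N) := by
      ext i
      simp only [Finset.mem_sdiff, Finset.mem_union, Finset.mem_univ, true_and]
      tauto
    have h2 : Finset.univ \ S = (Finset.univ \ (N ∪ S)) ∪ (N \ S) := by
      ext i
      simp only [Finset.mem_sdiff, Finset.mem_union, Finset.mem_univ, true_and]
      tauto
    have hdisj1 : Disjoint (Finset.univ \ (N ∪ S)) (S \ N) := by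
      simp only [Finset.disjoint_left, Finset.mem_sdiff, Finset.mem_union]
      tauto
    have hdisj2 : Disjoint (Finset.univ \ (N ∪ S)) (N \ S) := by
      simp only [Finset.disjoint_left, Finset.mem_sdiff, Finset.mem_union]
      tauto
    rw [h1, h2, Finset.sum_union hdisj1, Finset.sum_union hdisj2]
    apply add_le_add le_rfl
    by_cases hSN : (S \ N).Nonempty
    · have hcard : (S \ N).card ≤ (N \ S).card := by
        have e1 : (S \ N).card + (S ∩ N).card = S.card :=
          Finset.card_sdiff_add_card_inter S N
        have e2 : (N \ S).card + (N ∩ S).card = N.card :=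
          Finset.card_sdiff_add_card_inter N S
        have e3 : (S ∩ N).card = (N ∩ S).card := by rw [Finset.inter_comm]
        omega
      have hNS : (N \ S).Nonempty :=
        Finset.card_pos.mp (lt_of_lt_of_le (Finset.card_pos.mpr hSN) hcard)
      obtain ⟨i0, hi0mem, hi0min⟩ :=
        Finset.exists_min_image (N \ S) (fun i => (d i)^2) hNS
      have hi0N : i0 ∈ N := (Finset.mem_sdiff.mp hi0mem).1
      calc ∑ j ∈ S \ N, (d j)^2
          ≤ ∑ _j ∈ S \ N, (d i0)^2 := by
            apply Finset.sum_le_sum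
            intro j hj
            have hjN : j ∉ N := (Finset.mem_sdiff.mp hj).2
            exact pow_le_pow_left₀ (hd0 j) (hN_largest i0 hi0N j hjN) 2
        _ = (S \ N).card • (d i0)^2 := by rw [Finset.sum_const]
        _ ≤ (N \ S).card • (d i0)^2 := by
            exact nsmul_le_nsmul_left (sq_nonneg _) hcard
        _ ≤ ∑ j ∈ N \ S, (d j)^2 :=
            Finset.card_nsmul_le_sum _ _ _ (fun j hj => hi0min j hj)
    · rw [Finset.not_nonempty_iff_eq_empty.mp hSN, Finset.sum_empty]
      exact Finset.sum_nonneg (fun j _ => sq_nonneg _)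
  constructor
  · -- membership
    have hq : ∀ i, ∃ c ∈ C, d i = |w i - c| :=
      fun i => Finset.exists_mem_eq_inf' hC _
    choose q hqC hqd using hq
    refine ⟨q, fun i => if i ∈ N then w i - q i else 0, hqC, ?_, ?_⟩
    · unfold norm0
      calc (Finset.univ.filter (fun i => (if i ∈ N then w i - q i else 0) ≠ 0)).card
          ≤ N.card := by
            apply Finset.card_le_card
            intro i hi
            simp only [Finset.mem_filter] at hi
            by_contra h
            simp [h] at hi
        _ = κ := hN
    · rw [← Finset.sum_sdiff (Finset.subset_univ N)]
      have hz : ∑ i ∈ N, (w i - q i - if i ∈ N then w i - q i else 0)^2 = 0 := by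
        apply Finset.sum_eq_zero
        intro i hi
        simp [hi]
      rw [hz, add_zero]
      apply Finset.sum_congr rfl
      intro i hi
      have hiN : i ∉ N := (Finset.mem_sdiff.mp hi).2
      have h' : (C.inf' hC fun c => |w i - c|) = |w i - q i| := hqd i
      rw [h']
      simp [hiN, sq_abs]
  · -- lower bound
    rintro v ⟨q, s, hqC, hs, rfl⟩
    set S := Finset.univ.filter (fun i => s i ≠ 0) with hS
    have hle : ∑ i ∈ Finset.univ \ N, (d i)^2 ≤ ∑ i ∈ Finset.univ \ S, (d i)^2 :=
      key S hs
    refine le_trans hle ?_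
    calc ∑ i ∈ Finset.univ \ S, (d i)^2
        ≤ ∑ i ∈ Finset.univ \ S, (w i - q i - s i)^2 := by
          apply Finset.sum_le_sum
          intro i hi
          have hsi : s i = 0 := by
            have := (Finset.mem_sdiff.mp hi).2
            simp only [hS, Finset.mem_filter, Finset.mem_univ, true_and,
              not_not] at this
            exact this
          rw [hsi, sub_zero]
          have h1 : d i ≤ |w i - q i| := Finset.inf'_le _ (hqC i)
          calc (d i)^2 ≤ |w i - q i|^2 := pow_le_pow_left₀ (hd0 i) h1 2
            _ = (w i - q i)^2 := sq_abs _
      _ ≤ ∑ i, (w i - q i - s i)^2 := by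
          apply Finset.sum_le_sum_of_subset_of_nonneg (Finset.sdiff_subset)
          intro i _ _
          exact sq_nonneg _
end

section
/- Let C ⊆ ℝ be finite nonempty, w ∈ ℝⁿ, and κ ≤ n. Then m(κ) from the quantization-plus-corrections problem satisfies m(κ) = Σ_{i=1}^{n} d_{(i)}² − Σ_{i=n−κ+1}^{n} d_{(i)}², where d_i = dist(w_i, C) and d_{(1)} ≤ ⋯ ≤ d_{(n)} is the sorted sequence of the d_i. -/
lemma card_top (n κ : ℕ) (hκ : κ ≤ n) :
    (Finset.univ.filter (fun j : Fin n => n - κ ≤ (j : ℕ))).card = κ := by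
  have : (Finset.univ.filter (fun j : Fin n => n - κ ≤ (j : ℕ))).card
      = (Finset.Ico (n - κ) n).card := by
    refine Finset.card_bij (fun j _ => (j : ℕ)) ?_ ?_ ?_
    · intro a ha
      simp only [Finset.mem_filter] at ha
      simp [Finset.mem_Ico, ha.2, a.isLt]
    · intro a ha b hb h
      exact Fin.ext h
    · intro b hb
      simp only [Finset.mem_Ico] at hb
      refine ⟨⟨b, hb.2⟩, ?_, rfl⟩
      simp only [Finset.mem_filter, Finset.mem_univ, true_and]
      exact hb.1
  rw [this, Nat.card_Ico]
  omega

lemma key {n κ : ℕ} (hκ : κ ≤ n) (f : Fin n → ℝ) (hf : Monotone f)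
    (hf0 : ∀ j, 0 ≤ f j) (A : Finset (Fin n)) (hA : A.card ≤ κ) :
    ∑ j ∈ A, f j ≤ ∑ j ∈ Finset.univ.filter (fun j : Fin n => n - κ ≤ (j : ℕ)), f j := by
  set T := Finset.univ.filter (fun j : Fin n => n - κ ≤ (j : ℕ)) with hTdef
  have hT : T.card = κ := card_top n κ hκ
  have hsplitA : ∑ j ∈ A, f j = ∑ j ∈ A ∩ T, f j + ∑ j ∈ A \ T, f j := by
    rw [Finset.sum_inter_add_sum_sdiff]
  have hsplitT : ∑ j ∈ T, f j = ∑ j ∈ T ∩ A, f j + ∑ j ∈ T \ A, f j := by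
    rw [Finset.sum_inter_add_sum_sdiff]
  rw [hsplitA, hsplitT, Finset.inter_comm A T]
  refine add_le_add (le_refl _) ?_
  have hBD : (A \ T).card ≤ (T \ A).card := by
    have h1 := Finset.card_sdiff_add_card_inter A T
    have h2 := Finset.card_sdiff_add_card_inter T A
    rw [Finset.inter_comm T A] at h2
    omega
  rcases (T \ A).eq_empty_or_nonempty with hE | hNE
  · have h0 : (A \ T).card = 0 := by rw [hE] at hBD; simpa using hBD
    have : A \ T = ∅ := Finset.card_eq_zero.mp h0
    simp [this, hE]
  · set c := (T \ A).inf' hNE f with hc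
    have hc0 : 0 ≤ c := Finset.le_inf' hNE f (fun d _ => hf0 d)
    have hub : ∀ b ∈ A \ T, f b ≤ c := by
      intro b hb
      apply Finset.le_inf' hNE f
      intro e he
      apply hf
      have hb2 : b ∉ T := (Finset.mem_sdiff.mp hb).2
      have hb' : ¬ (n - κ ≤ (b : ℕ)) := by simpa [hTdef] using hb2
      have he2 : e ∈ T := (Finset.mem_sdiff.mp he).1
      have he' : n - κ ≤ (e : ℕ) := by simpa [hTdef] using he2
      exact Fin.le_def.mpr (by omega)
    calc ∑ j ∈ A \ T, f j ≤ (A \ T).card • c := Finset.sum_le_card_nsmul _ _ _ hub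
      _ ≤ (T \ A).card • c := by
          rw [nsmul_eq_mul, nsmul_eq_mul]
          exact mul_le_mul_of_nonneg_right (by exact_mod_cast hBD) hc0
      _ ≤ ∑ j ∈ T \ A, f j := Finset.card_nsmul_le_sum _ _ _ (fun e he => Finset.inf'_le f he)

/-- The minimum value of the quantization-plus-corrections problem with budget
κ equals `Σ_i d_(i)² - Σ_{i=n-κ+1}^{n} d_(i)²`, where `d i = dist(w i, C)` and
`d_(1) ≤ ⋯ ≤ d_(n)` is the sorted sequence (given by a sorting permutation σ):
the objective drops by the sum of the κ largest squared residuals. -/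
theorem stmt_14 {n : ℕ} (C : Finset ℝ) (hC : C.Nonempty) (w : Fin n → ℝ)
    (κ : ℕ) (hκ : κ ≤ n) (d : Fin n → ℝ)
    (hd : ∀ i, d i = C.inf' hC (fun c => |w i - c|))
    (σ : Equiv.Perm (Fin n)) (hσ : Monotone (fun i => d (σ i))) :
    IsLeast {v : ℝ | ∃ q s : Fin n → ℝ, (∀ i, q i ∈ C) ∧ norm0 s ≤ κ ∧
        v = ∑ i, (w i - q i - s i)^2}
      ((∑ i, (d i)^2) -
        ∑ i ∈ Finset.univ.filter (fun i : Fin n => n - κ ≤ (i : ℕ)),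
          (d (σ i))^2) := by
  have hd0 : ∀ i, 0 ≤ d i := by
    intro i
    rw [hd i]
    exact Finset.le_inf' hC _ (fun c _ => abs_nonneg _)
  have hqex : ∀ i, ∃ c ∈ C, d i = |w i - c| := by
    intro i
    obtain ⟨c, hc, hce⟩ := Finset.exists_mem_eq_inf' hC (fun c => |w i - c|)
    exact ⟨c, hc, (hd i).trans hce⟩
  choose q hqC hqd using hqex
  -- sum reindexing
  have hreindex : ∑ j, (d (σ j))^2 = ∑ i, (d i)^2 := Equiv.sum_comp σ (fun i => (d i)^2)
  constructor
  · -- membership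
    refine ⟨q, fun i => if n - κ ≤ ((σ.symm i : Fin n) : ℕ) then w i - q i else 0,
      hqC, ?_, ?_⟩
    · -- norm0 bound
      unfold norm0
      calc (Finset.univ.filter (fun i =>
              (if n - κ ≤ ((σ.symm i : Fin n) : ℕ) then w i - q i else 0) ≠ 0)).card
          ≤ (Finset.univ.filter (fun j : Fin n => n - κ ≤ (j : ℕ))).card := by
            apply Finset.card_le_card_of_injOn (fun i => σ.symm i)
            · intro i hi
              simp only [Finset.mem_coe, Finset.mem_filter, Finset.mem_univ, true_and] at hi ⊢
              by_contra h
              simp [h] at hi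
            · intro a _ b _ h
              exact σ.symm.injective h
        _ = κ := card_top n κ hκ
    · -- value
      have hterm : ∀ i, (w i - q i -
          (if n - κ ≤ ((σ.symm i : Fin n) : ℕ) then w i - q i else 0))^2
          = if n - κ ≤ ((σ.symm i : Fin n) : ℕ) then 0 else (d i)^2 := by
        intro i
        by_cases h : n - κ ≤ ((σ.symm i : Fin n) : ℕ) <;> simp [h]
        rw [hqd i, sq_abs]
      rw [Finset.sum_congr rfl (fun i _ => hterm i)]
      rw [← Equiv.sum_comp σ (fun i => if n - κ ≤ ((σ.symm i : Fin n) : ℕ) then 0 else (d i)^2)]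
      simp only [Equiv.symm_apply_apply]
      rw [Finset.sum_ite, Finset.sum_const_zero, zero_add]
      rw [← hreindex, ← Finset.sum_filter_add_sum_filter_not Finset.univ
        (fun j : Fin n => n - κ ≤ (j : ℕ)) (fun j => (d (σ j))^2)]
      ring
  · -- lower bound
    rintro v ⟨q', s, hq'C, hs, rfl⟩
    set supp := Finset.univ.filter (fun i => s i ≠ 0) with hsupp
    have h1 : ∀ i, d i ≤ |w i - q' i| := by
      intro i
      rw [hd i]
      exact Finset.inf'_le _ (hq'C i)
    have step1 : ∑ i ∈ Finset.univ \ supp, (d i)^2 ≤ ∑ i, (w i - q' i - s i)^2 := by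
      calc ∑ i ∈ Finset.univ \ supp, (d i)^2
          ≤ ∑ i ∈ Finset.univ \ supp, (w i - q' i - s i)^2 := by
            apply Finset.sum_le_sum
            intro i hi
            have hsi : s i = 0 := by
              simp only [hsupp, Finset.mem_sdiff, Finset.mem_filter, Finset.mem_univ,
                true_and, not_not] at hi
              exact hi
            rw [hsi, sub_zero]
            calc (d i)^2 ≤ |w i - q' i|^2 :=
                  pow_le_pow_left₀ (hd0 i) (h1 i) 2
              _ = (w i - q' i)^2 := sq_abs _
        _ ≤ ∑ i, (w i - q' i - s i)^2 :=
            Finset.sum_le_sum_of_subset_of_nonneg (Finset.sdiff_subset)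
              (fun i _ _ => sq_nonneg _)
    have step2 : ∑ i ∈ supp, (d i)^2 ≤
        ∑ j ∈ Finset.univ.filter (fun j : Fin n => n - κ ≤ (j : ℕ)), (d (σ j))^2 := by
      have hcard : (supp.image (fun i => σ.symm i)).card ≤ κ := by
        calc (supp.image (fun i => σ.symm i)).card ≤ supp.card := Finset.card_image_le
          _ ≤ κ := hs
      have hmono : Monotone (fun j => (d (σ j))^2) := by
        intro a b hab
        exact pow_le_pow_left₀ (hd0 _) (hσ hab) 2
      have := key hκ (fun j => (d (σ j))^2) hmono (fun j => sq_nonneg _)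
        (supp.image (fun i => σ.symm i)) hcard
      rw [Finset.sum_image (fun a _ b _ h => σ.symm.injective h)] at this
      simpa using this
    have hsplit : ∑ i ∈ Finset.univ \ supp, (d i)^2
        = ∑ i, (d i)^2 - ∑ i ∈ supp, (d i)^2 :=
      Finset.sum_sdiff_eq_sub (Finset.subset_univ _)
    linarith
end
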